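/- Let S_1,...,S_J > 0, C_1,...,C_J > 0, and C > 0. Among allocations (N_1,...,N_J) with N_j > 0 and ∑_j C_j N_j = C, the product ∏_j S_j²/N_j is minimized when C_j N_j = C/J for each j, i.e., when the budget is split equally across treatment arms. -/

import Mathlib

/-- Cost-constrained D-optimality: subject to ∑ C_j N_j = C, the product
∏ S_j²/N_j is minimized by the equal budget split C_j N_j = C/J. -/
theorem stmt_12 (J : ℕ) (hJ : 1 ≤ J) (C : ℝ) (hC : 0 < C)
    (S Cost : Fin J → ℝ) (hS : ∀ j, 0 < S j) (hCost : ∀ j, 0 < Cost j)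
    (Na : Fin J → ℝ) (hNa : ∀ j, 0 < Na j)
    (hsum : ∑ j, Cost j * Na j = C) :
    (∏ j, (S j) ^ 2 / (C / J / Cost j)) ≤ ∏ j, (S j) ^ 2 / Na j := by
  have hJ0 : (0:ℝ) < J := by exact_mod_cast hJ
  -- AM-GM: ∏ (Cost j * Na j) ≤ (C/J)^J
  set z : Fin J → ℝ := fun j => Cost j * Na j with hz
  have hzpos : ∀ j, 0 < z j := fun j => mul_pos (hCost j) (hNa j)
  have hw : ∑ _j : Fin J, (J:ℝ)⁻¹ = 1 := by
    simp [Finset.sum_const, Finset.card_univ]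
    field_simp
  have key : ∏ j, z j ≤ (C / J) ^ J := by
    have h1 : ∏ j, (z j) ^ ((J:ℝ)⁻¹) ≤ ∑ j, (J:ℝ)⁻¹ * z j := by
      exact Real.geom_mean_le_arith_mean_weighted Finset.univ (fun _ => (J:ℝ)⁻¹) z
        (fun j _ => by positivity) hw (fun j _ => (hzpos j).le)
    have h2 : ∑ j, (J:ℝ)⁻¹ * z j = C / J := by
      rw [← Finset.mul_sum, hz]
      simp only []
      rw [hsum]; ring
    have h3 : ∏ j, (z j) ^ ((J:ℝ)⁻¹) = (∏ j, z j) ^ ((J:ℝ)⁻¹) := by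
      rw [← Real.finset_prod_rpow _ _ (fun j _ => (hzpos j).le)]
    have h4 : (∏ j, z j) ^ ((J:ℝ)⁻¹) ≤ C / J := by
      rw [← h3, ← h2]; exact h1
    have hP : 0 < ∏ j, z j := Finset.prod_pos (fun j _ => hzpos j)
    have := Real.rpow_le_rpow (Real.rpow_nonneg hP.le _) h4 (le_of_lt hJ0)
    rw [← Real.rpow_mul hP.le, inv_mul_cancel₀ (ne_of_gt hJ0), Real.rpow_one,
      Real.rpow_natCast] at this
    exact this
  -- Rewrite both sides as quotient of products
  have hNprod : ∏ j, Na j ≤ ∏ j, (C / J / Cost j) := by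
    have hCostP : 0 < ∏ j, Cost j := Finset.prod_pos (fun j _ => hCost j)
    have hprodz : ∏ j, z j = (∏ j, Cost j) * ∏ j, Na j := by
      rw [hz, Finset.prod_mul_distrib]
    have hq : ∏ j, (C / J / Cost j) = (C / J) ^ J / ∏ j, Cost j := by
      rw [Finset.prod_div_distrib, Finset.prod_const, Finset.card_univ, Fintype.card_fin]
    rw [hq, le_div_iff₀ hCostP]
    calc (∏ j, Na j) * ∏ j, Cost j = ∏ j, z j := by rw [hprodz]; ring
      _ ≤ (C / J) ^ J := key
  have hS2 : 0 < ∏ j, (S j) ^ 2 := Finset.prod_pos (fun j _ => pow_pos (hS j) 2)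
  have hXpos : 0 < ∏ j, (C / J / Cost j) :=
    Finset.prod_pos (fun j _ => div_pos (div_pos hC hJ0) (hCost j))
  have hNpos : 0 < ∏ j, Na j := Finset.prod_pos (fun j _ => hNa j)
  have hL : ∏ j, (S j) ^ 2 / (C / J / Cost j)
      = (∏ j, (S j) ^ 2) / (∏ j, (C / J / Cost j)) := Finset.prod_div_distrib _ _
  have hR : ∏ j, (S j) ^ 2 / Na j
      = (∏ j, (S j) ^ 2) / (∏ j, Na j) := Finset.prod_div_distrib _ _
  rw [hL, hR]
  exact div_le_div_of_nonneg_left hS2.le hNpos hNprod
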